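/- (Root pairing) For every integer k ≥ 1, if q_1 < q_2 < ⋯ < q_k < 0 denote the (real, negative, distinct) roots of the Euler–Frobenius polynomial E_k, then q_j · q_{k+1−j} = 1 for every j = 1, …, k. -/

import Mathlib

open Finset Polynomial

noncomputable section

/-- Euler's formula for the coefficients of the Euler–Frobenius polynomial `E_k`. -/
def efCoeff (k s : ℕ) : ℤ :=
  ∑ j ∈ Finset.range (s + 1),
    (-1) ^ j * ((k + 2).choose j : ℤ) * ((s + 1 - j : ℕ) : ℤ) ^ (k + 1)

/-- The Euler–Frobenius polynomial `E_k` as a real polynomial. -/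
def efPoly (k : ℕ) : Polynomial ℝ :=
  ∑ s ∈ Finset.range (k + 1), Polynomial.C ((efCoeff k s : ℝ)) * Polynomial.X ^ s

open scoped fwdDiff

lemma fwdDiff_poly_eval (P : Polynomial ℤ) :
    Δ_[(1:ℤ)] (fun x : ℤ => P.eval x) = fun x => (P.comp (X + C 1) - P).eval x := by
  funext x
  simp [fwdDiff, eval_comp]

lemma natDegree_comp_sub_lt (P : Polynomial ℤ) (n : ℕ) (h : P.natDegree ≤ n + 1) :
    (P.comp (X + C 1) - P).natDegree ≤ n := by
  rcases eq_or_ne P 0 with rfl | hP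
  · simp
  rcases Nat.eq_zero_or_pos P.natDegree with h0 | hpos
  · obtain ⟨a, rfl⟩ := Polynomial.natDegree_eq_zero.mp h0
    simp
  have hX : (X + C (1:ℤ)).natDegree = 1 := Polynomial.natDegree_X_add_C 1
  have hdeg : (P.comp (X + C 1)).natDegree = P.natDegree := by
    rw [Polynomial.natDegree_comp, hX, mul_one]
  have hlc : (P.comp (X + C 1)).leadingCoeff = P.leadingCoeff := by
    rw [Polynomial.leadingCoeff_comp (by rw [hX]; norm_num)]
    have : (X + C (1:ℤ)).leadingCoeff = 1 := by
      have := Polynomial.monic_X_add_C (1:ℤ)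
      exact this
    rw [this, one_pow, mul_one]
  have hcomp_ne : P.comp (X + C 1) ≠ 0 := by
    intro h0
    rw [h0] at hlc
    exact hP (Polynomial.leadingCoeff_eq_zero.mp (by simp [← hlc]))
  have hdegeq : (P.comp (X + C 1)).degree = P.degree := by
    rw [Polynomial.degree_eq_natDegree hP, Polynomial.degree_eq_natDegree hcomp_ne, hdeg]
  have hd : (P.comp (X + C 1) - P).degree < P.degree := by
    have := Polynomial.degree_sub_lt hdegeq hcomp_ne hlc
    rwa [hdegeq] at this
  rcases eq_or_ne (P.comp (X + C 1) - P) 0 with hz | hz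
  · rw [hz]; simp
  have := Polynomial.natDegree_lt_natDegree hz hd
  omega

lemma fwdDiff_iter_poly_eval (n : ℕ) :
    ∀ (P : Polynomial ℤ), P.natDegree ≤ n → (Δ_[(1:ℤ)])^[n + 1] (fun x : ℤ => P.eval x) = 0 := by
  induction n with
  | zero =>
    intro P hP
    obtain ⟨a, rfl⟩ := Polynomial.natDegree_eq_zero.mp (Nat.le_zero.mp hP)
    funext x
    simp [fwdDiff]
  | succ n ih =>
    intro P hP
    have : (Δ_[(1:ℤ)])^[n + 1 + 1] (fun x : ℤ => P.eval x)
        = (Δ_[(1:ℤ)])^[n + 1] (Δ_[(1:ℤ)] (fun x : ℤ => P.eval x)) := by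
      rw [Function.iterate_succ_apply]
    rw [this, fwdDiff_poly_eval]
    exact ih _ (natDegree_comp_sub_lt P n hP)

lemma alt_sum_zero (k s : ℕ) :
    ∑ j ∈ Finset.range (k + 3),
      (-1 : ℤ) ^ j * ((k + 2).choose j : ℤ) * ((s : ℤ) + 1 - j) ^ (k + 1) = 0 := by
  set P : Polynomial ℤ := (C ((s : ℤ) + 1) - X) ^ (k + 1) with hP
  have hdeg : P.natDegree ≤ k + 1 := by
    calc P.natDegree ≤ (k + 1) * (C ((s:ℤ)+1) - X).natDegree := Polynomial.natDegree_pow_le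
    _ ≤ (k + 1) * 1 := by
        gcongr
        rw [show C ((s:ℤ)+1) - X = -(X - C ((s:ℤ)+1)) by ring, Polynomial.natDegree_neg,
          Polynomial.natDegree_X_sub_C]
    _ = k + 1 := mul_one _
  have h0 : (Δ_[(1:ℤ)])^[k + 2] (fun x : ℤ => P.eval x) = 0 :=
    fwdDiff_iter_poly_eval (k + 1) P hdeg
  have h1 := fwdDiff_iter_eq_sum_shift (1 : ℤ) (fun x : ℤ => P.eval x) (k + 2) 0
  rw [h0] at h1
  simp only [Pi.zero_apply] at h1
  have h2 : (0 : ℤ) = ∑ j ∈ Finset.range (k + 3),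
      (-1 : ℤ) ^ (k + 2 - j) * ((k + 2).choose j : ℤ) * ((s : ℤ) + 1 - j) ^ (k + 1) := by
    rw [h1]
    apply Finset.sum_congr rfl
    intro j hj
    simp only [hP, smul_eq_mul, zero_add, nsmul_eq_mul, mul_one, Polynomial.eval_pow,
      Polynomial.eval_sub, Polynomial.eval_C, Polynomial.eval_X]
  have h3 : ∀ j ∈ Finset.range (k + 3),
      (-1 : ℤ) ^ j * ((k + 2).choose j : ℤ) * ((s : ℤ) + 1 - j) ^ (k + 1)
      = (-1 : ℤ) ^ (k + 2) * ((-1 : ℤ) ^ (k + 2 - j) * ((k + 2).choose j : ℤ)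
          * ((s : ℤ) + 1 - j) ^ (k + 1)) := by
    intro j hj
    rw [Finset.mem_range] at hj
    have e1 : (-1 : ℤ) ^ (k + 2 - j) * (-1) ^ j = (-1) ^ (k + 2) := by
      rw [← pow_add]; congr 1; omega
    have e3 : (-1 : ℤ) ^ (k + 2 - j) * (-1) ^ (k + 2 - j) = 1 := by
      rw [← pow_add]; exact Even.neg_one_pow ⟨k + 2 - j, rfl⟩
    have key : (-1 : ℤ) ^ (k + 2) * (-1) ^ (k + 2 - j) = (-1) ^ j := by
      linear_combination ((-1 : ℤ) ^ j) * e3 - ((-1 : ℤ) ^ (k + 2 - j)) * e1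
    rw [← key]; ring
  rw [Finset.sum_congr rfl h3, ← Finset.mul_sum, ← h2, mul_zero]

lemma neg_one_pow_sub (n j : ℕ) (h : j ≤ n) : (-1 : ℤ) ^ (n - j) = (-1) ^ n * (-1) ^ j := by
  have e1 : (-1 : ℤ) ^ (n - j) * (-1) ^ j = (-1) ^ n := by rw [← pow_add]; congr 1; omega
  have e2 : (-1 : ℤ) ^ j * (-1) ^ j = 1 := by rw [← pow_add]; exact Even.neg_one_pow ⟨j, rfl⟩
  calc (-1 : ℤ) ^ (n - j) = (-1) ^ (n - j) * ((-1) ^ j * (-1) ^ j) := by rw [e2, mul_one]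
  _ = ((-1) ^ (n - j) * (-1) ^ j) * (-1) ^ j := by ring
  _ = (-1) ^ n * (-1) ^ j := by rw [e1]

lemma efCoeff_eq (k t : ℕ) : efCoeff k t
    = ∑ j ∈ Finset.range (t + 1),
        (-1 : ℤ) ^ j * ((k + 2).choose j : ℤ) * ((t : ℤ) + 1 - j) ^ (k + 1) := by
  unfold efCoeff
  apply Finset.sum_congr rfl
  intro j hj
  rw [Finset.mem_range] at hj
  have : ((t + 1 - j : ℕ) : ℤ) = (t : ℤ) + 1 - j := by omega
  rw [this]

lemma efCoeff_symm (k s : ℕ) (hs : s ≤ k) : efCoeff k (k - s) = efCoeff k s := by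
  set S2 := ∑ j ∈ Finset.Ico (s + 1) (k + 3),
    (-1 : ℤ) ^ j * ((k + 2).choose j : ℤ) * ((j : ℤ) - (s + 1)) ^ (k + 1) with hS2
  have hsplit : efCoeff k s + (-1 : ℤ) ^ (k + 1) * S2 = 0 := by
    have h0 := alt_sum_zero k s
    rw [Finset.range_eq_Ico,
      ← Finset.sum_Ico_consecutive _ (Nat.zero_le (s + 1)) (by omega : s + 1 ≤ k + 3)] at h0
    rw [← h0]
    congr 1
    · rw [efCoeff_eq, Finset.range_eq_Ico]
    · rw [hS2, Finset.mul_sum]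
      apply Finset.sum_congr rfl
      intro j hj
      have hb : ((s : ℤ) + 1 - j) ^ (k + 1) = (-1) ^ (k + 1) * ((j : ℤ) - (s + 1)) ^ (k + 1) := by
        rw [show (s : ℤ) + 1 - j = -((j : ℤ) - (s + 1)) by ring, neg_pow]
      rw [hb]; ring
  have hB : efCoeff k s = (-1 : ℤ) ^ k * S2 := by
    have e : (-1 : ℤ) ^ (k + 1) = -(-1) ^ k := by rw [pow_succ]; ring
    linear_combination hsplit + S2 * e
  have hC : efCoeff k (k - s) = (-1 : ℤ) ^ k * S2 := by
    rw [efCoeff_eq]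
    have hext : ∑ j ∈ Finset.range (k - s + 1),
          (-1 : ℤ) ^ j * ((k + 2).choose j : ℤ) * (((k - s : ℕ) : ℤ) + 1 - j) ^ (k + 1)
        = ∑ j ∈ Finset.range (k - s + 2),
          (-1 : ℤ) ^ j * ((k + 2).choose j : ℤ) * (((k - s : ℕ) : ℤ) + 1 - j) ^ (k + 1) := by
      rw [Finset.sum_range_succ (n := k - s + 1)]
      have : (((k - s : ℕ) : ℤ) + 1 - ((k - s + 1 : ℕ) : ℤ)) = 0 := by push_cast; ring
      rw [this, zero_pow (by omega), mul_zero, add_zero]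
    rw [hext, hS2, Finset.mul_sum]
    apply Finset.sum_nbij' (i := fun j' => k + 2 - j') (j := fun j => k + 2 - j)
    · intro a ha; rw [Finset.mem_range] at ha; rw [Finset.mem_Ico]; omega
    · intro a ha; rw [Finset.mem_Ico] at ha; rw [Finset.mem_range]; omega
    · intro a ha; rw [Finset.mem_range] at ha; omega
    · intro a ha; rw [Finset.mem_Ico] at ha; omega
    · intro a ha
      rw [Finset.mem_range] at ha
      have hc : (k + 2).choose (k + 2 - a) = (k + 2).choose a := Nat.choose_symm (by omega)
      have hcast : ((k + 2 - a : ℕ) : ℤ) = (k : ℤ) + 2 - a := by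
        rw [Nat.cast_sub (show a ≤ k + 2 by omega)]; push_cast; ring
      have hcast2 : ((k - s : ℕ) : ℤ) = (k : ℤ) - s := by
        rw [Nat.cast_sub hs]
      have hsign : (-1 : ℤ) ^ (k + 2 - a) = (-1) ^ (k + 2) * (-1) ^ a :=
        neg_one_pow_sub (k + 2) a (by omega)
      have hone : (-1 : ℤ) ^ k * (-1) ^ (k + 2) = 1 := by
        rw [← pow_add]; exact Even.neg_one_pow ⟨k + 1, by ring⟩
      rw [hc, hcast, hcast2, hsign]
      linear_combination (-((-1 : ℤ) ^ a * ((k + 2).choose a : ℤ)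
        * ((k : ℤ) - s + 1 - a) ^ (k + 1))) * hone
  rw [hB, hC]

lemma efPoly_eval (k : ℕ) (x : ℝ) :
    (efPoly k).eval x = ∑ s ∈ Finset.range (k + 1), (efCoeff k s : ℝ) * x ^ s := by
  simp [efPoly, Polynomial.eval_finset_sum]

lemma efPoly_reflect (k : ℕ) (x : ℝ) (hx : x ≠ 0) :
    (efPoly k).eval x = x ^ k * (efPoly k).eval x⁻¹ := by
  rw [efPoly_eval, efPoly_eval, Finset.mul_sum, ← Finset.sum_range_reflect]
  apply Finset.sum_congr rfl
  intro s hs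
  rw [Finset.mem_range] at hs
  have h1 : k + 1 - 1 - s = k - s := by omega
  rw [h1, efCoeff_symm k s (by omega)]
  have h2 : x ^ k = x ^ (k - s) * x ^ s := by rw [← pow_add]; congr 1; omega
  rw [h2]
  have hxs : x ^ s ≠ 0 := pow_ne_zero _ hx
  field_simp
  rw [one_div, inv_pow, mul_assoc, mul_inv_cancel₀ hxs, mul_one]

/-- **Root pairing**: if `q_1 < ⋯ < q_k < 0` are the roots of `E_k`, then
`q_j · q_{k+1−j} = 1` for every `j` (in `Fin k` indexing, `q j * q j.rev = 1`). -/
theorem efPoly_roots_pairing (k : ℕ) (hk : 1 ≤ k) (q : Fin k → ℝ)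
    (hmono : StrictMono q) (hneg : ∀ j, q j < 0)
    (hfact : efPoly k = ∏ j : Fin k, (Polynomial.X - Polynomial.C (q j))) :
    ∀ j : Fin k, q j * q j.rev = 1 := by
  have hqne : ∀ i, q i ≠ 0 := fun i => (hneg i).ne
  have hrootq : ∀ i, (efPoly k).eval (q i) = 0 := by
    intro i
    rw [hfact, Polynomial.eval_prod]
    apply Finset.prod_eq_zero (Finset.mem_univ i)
    simp
  have hrootinv : ∀ i, (efPoly k).eval (q i)⁻¹ = 0 := by
    intro i
    have := efPoly_reflect k (q i)⁻¹ (inv_ne_zero (hqne i))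
    rw [inv_inv, hrootq i, mul_zero] at this
    exact this
  have hroot_iff : ∀ y : ℝ, (efPoly k).eval y = 0 → ∃ i, q i = y := by
    intro y hy
    rw [hfact, Polynomial.eval_prod] at hy
    obtain ⟨i, -, hi⟩ := Finset.prod_eq_zero_iff.mp hy
    refine ⟨i, ?_⟩
    have : y - q i = 0 := by simpa using hi
    linarith
  set r : Fin k → ℝ := fun i => (q i.rev)⁻¹ with hr
  have hrmono : StrictMono r := by
    intro a b hab
    have h1 : b.rev < a.rev := by rwa [Fin.rev_lt_rev]
    have h2 : q b.rev < q a.rev := hmono h1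
    exact (inv_lt_inv_of_neg (hneg a.rev) (hneg b.rev)).mpr h2
  have hrange : Set.range r = Set.range q := by
    apply Set.eq_of_subset_of_subset
    · rintro y ⟨i, rfl⟩
      obtain ⟨i', hi'⟩ := hroot_iff _ (hrootinv i.rev)
      exact ⟨i', hi'⟩
    · rintro y ⟨i, rfl⟩
      obtain ⟨i0, hi0⟩ := hroot_iff _ (hrootinv i)
      refine ⟨i0.rev, ?_⟩
      simp only [hr, Fin.rev_rev, hi0, inv_inv]
  haveI : WellFoundedLT (Fin k) := inferInstance
  have heq : r = q := (hrmono.range_inj hmono).mp hrange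
  intro j
  have : q j = (q j.rev)⁻¹ := (congrFun heq j).symm
  rw [this]
  exact inv_mul_cancel₀ (hqne j.rev)
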